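/- For the pentagon UPB state ρ (the normalized projector onto the orthogonal complement of span{|p_i⟩ = |v_i⟩⊗|v_{2i mod 5}⟩} in C³⊗C³) and the maximally entangled state |Ψ⁺⟩ = (1/√3)(|00⟩+|11⟩+|22⟩), one has ⟨Ψ⁺|ρ|Ψ⁺⟩ = (1/4)(1 − (7+√5)/(3(3+√5))) > 0. -/

import Mathlib

open scoped BigOperators ComplexConjugate

noncomputable section

def inC {ι : Type*} [Fintype ι] (x y : ι → ℂ) : ℂ := ∑ i, conj (x i) * y i

def prodVec {ι κ : Type*} (a : ι → ℂ) (b : κ → ℂ) : ι × κ → ℂ := fun p => a p.1 * b p.2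

def outer {ι : Type*} (x : ι → ℂ) : Matrix ι ι ℂ := Matrix.vecMulVec x (star x)

def h5 : ℝ := (1 / 2) * Real.sqrt (1 + Real.sqrt 5)

def N5 : ℝ := 2 / Real.sqrt (5 + Real.sqrt 5)

def v (i : Fin 5) : Fin 3 → ℂ :=
  ![((N5 * Real.cos (2 * Real.pi * (i : ℕ) / 5) : ℝ) : ℂ),
    ((N5 * Real.sin (2 * Real.pi * (i : ℕ) / 5) : ℝ) : ℂ),
    ((N5 * h5 : ℝ) : ℂ)]

/-- The pentagon UPB state: normalized projector onto the complement of the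
span of the `|p_i⟩ = |v_i⟩ ⊗ |v_{2i mod 5}⟩`. -/
def ρpent : Matrix (Fin 3 × Fin 3) (Fin 3 × Fin 3) ℂ :=
  (4 : ℂ)⁻¹ • (1 - ∑ i : Fin 5, outer (prodVec (v i) (v (2 * i))))

/-- The maximally entangled state `|Ψ⁺⟩ = (1/√3)(|00⟩+|11⟩+|22⟩)`. -/
def ψplus3 : Fin 3 × Fin 3 → ℂ :=
  fun p => if p.1 = p.2 then ((Real.sqrt 3 : ℝ) : ℂ)⁻¹ else 0

lemma inC_smul {ι : Type*} [Fintype ι] (a : ℂ) (x y : ι → ℂ) :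
    inC x (a • y) = a * inC x y := by
  simp only [inC, Pi.smul_apply, smul_eq_mul, Finset.mul_sum]
  exact Finset.sum_congr rfl fun i _ => by ring

lemma inC_sub {ι : Type*} [Fintype ι] (x y z : ι → ℂ) :
    inC x (y - z) = inC x y - inC x z := by
  simp [inC, mul_sub, Finset.sum_sub_distrib]

lemma inC_sum {ι κ : Type*} [Fintype ι] [Fintype κ] (x : ι → ℂ) (f : κ → ι → ℂ) :
    inC x (∑ j, f j) = ∑ j, inC x (f j) := by
  simp [inC, Finset.mul_sum]
  exact Finset.sum_comm

lemma inC_outer {ι : Type*} [Fintype ι] (x y : ι → ℂ) :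
    inC y ((outer x).mulVec y) = conj (inC x y) * inC x y := by
  simp only [inC, outer, Matrix.mulVec, Matrix.vecMulVec_apply, dotProduct,
    Pi.star_apply, map_sum, map_mul, RingHomCompTriple.comp_apply, RCLike.star_def,
    RingHom.id_apply, starRingEnd_self_apply, Finset.mul_sum, Finset.sum_mul]
  rw [Finset.sum_comm]
  exact Finset.sum_congr rfl fun i _ => Finset.sum_congr rfl fun j _ => by ring

lemma inC_psi_psi : inC ψplus3 ψplus3 = 1 := by
  have h3 : (Real.sqrt 3 : ℝ) * Real.sqrt 3 = 3 :=
    Real.mul_self_sqrt (by norm_num)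
  simp only [inC, ψplus3, Fintype.sum_prod_type, Fin.sum_univ_three]
  norm_num [Fin.ext_iff]
  have hne : ((Real.sqrt 3 : ℝ) : ℂ) ≠ 0 := by
    norm_cast
    positivity
  field_simp
  norm_cast
  push_cast
  nlinarith [h3]

lemma inC_prod_psi (a b : Fin 3 → ℂ) :
    inC (prodVec a b) ψplus3 =
      (conj (a 0) * conj (b 0) + conj (a 1) * conj (b 1) + conj (a 2) * conj (b 2))
        * ((Real.sqrt 3 : ℝ) : ℂ)⁻¹ := by
  simp only [inC, prodVec, ψplus3, Fintype.sum_prod_type, Fin.sum_univ_three]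
  norm_num [Fin.ext_iff]
  ring

lemma conj_z (i j : Fin 5) :
    conj (inC (prodVec (v i) (v j)) ψplus3) * inC (prodVec (v i) (v j)) ψplus3 =
      (((N5 ^ 2 * (Real.cos (2 * Real.pi * (i : ℕ) / 5 - 2 * Real.pi * (j : ℕ) / 5) + h5 ^ 2)
          * (Real.sqrt 3)⁻¹) ^ 2 : ℝ) : ℂ) := by
  have hz : inC (prodVec (v i) (v j)) ψplus3 =
      ((N5 ^ 2 * (Real.cos (2 * Real.pi * (i : ℕ) / 5 - 2 * Real.pi * (j : ℕ) / 5) + h5 ^ 2)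
          * (Real.sqrt 3)⁻¹ : ℝ) : ℂ) := by
    rw [inC_prod_psi]
    simp only [v, Matrix.cons_val_zero, Matrix.cons_val_one, Matrix.head_cons,
      Matrix.cons_val_two, Matrix.tail_cons, Complex.conj_ofReal]
    rw [Real.cos_sub]
    push_cast
    ring
  rw [hz, Complex.conj_ofReal, ← Complex.ofReal_mul]
  norm_num
  ring

lemma core :
    (4:ℝ)⁻¹ * (1 -
      ((N5^2 * (Real.cos (2*Real.pi*0/5 - 2*Real.pi*0/5) + h5^2) * (Real.sqrt 3)⁻¹)^2
      + (N5^2 * (Real.cos (2*Real.pi*1/5 - 2*Real.pi*2/5) + h5^2) * (Real.sqrt 3)⁻¹)^2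
      + (N5^2 * (Real.cos (2*Real.pi*2/5 - 2*Real.pi*4/5) + h5^2) * (Real.sqrt 3)⁻¹)^2
      + (N5^2 * (Real.cos (2*Real.pi*3/5 - 2*Real.pi*1/5) + h5^2) * (Real.sqrt 3)⁻¹)^2
      + (N5^2 * (Real.cos (2*Real.pi*4/5 - 2*Real.pi*3/5) + h5^2) * (Real.sqrt 3)⁻¹)^2))
    = (1/4) * (1 - (7 + Real.sqrt 5)/(3*(3 + Real.sqrt 5))) := by
  have hs : Real.sqrt 5 * Real.sqrt 5 = 5 := Real.mul_self_sqrt (by norm_num)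
  have hsnn : (0:ℝ) ≤ Real.sqrt 5 := Real.sqrt_nonneg 5
  have hc1 : Real.cos (2*Real.pi/5) = (Real.sqrt 5 - 1)/4 := by
    have h := Real.cos_two_mul (Real.pi/5)
    rw [Real.cos_pi_div_five] at h
    rw [show 2*Real.pi/5 = 2*(Real.pi/5) by ring, h]
    nlinarith [hs]
  have hc2 : Real.cos (4*Real.pi/5) = -((1+Real.sqrt 5)/4) := by
    have h := Real.cos_pi_sub (Real.pi/5)
    rw [Real.cos_pi_div_five] at h
    rw [show 4*Real.pi/5 = Real.pi - Real.pi/5 by ring, h]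
  have hh : h5^2 = (1+Real.sqrt 5)/4 := by
    rw [h5, mul_pow, Real.sq_sqrt (by positivity)]
    ring
  have hN : N5^2 = 4/(5+Real.sqrt 5) := by
    rw [N5, div_pow, Real.sq_sqrt (by positivity)]
    norm_num
  have ht : ((Real.sqrt 3)⁻¹)^2 = 1/3 := by
    rw [inv_pow, Real.sq_sqrt (by norm_num)]
    norm_num
  rw [show 2*Real.pi*0/5 - 2*Real.pi*0/5 = (0:ℝ) by ring,
    show 2*Real.pi*1/5 - 2*Real.pi*2/5 = -(2*Real.pi/5) by ring,
    show 2*Real.pi*2/5 - 2*Real.pi*4/5 = -(4*Real.pi/5) by ring,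
    show 2*Real.pi*3/5 - 2*Real.pi*1/5 = 4*Real.pi/5 by ring,
    show 2*Real.pi*4/5 - 2*Real.pi*3/5 = 2*Real.pi/5 by ring,
    Real.cos_neg, Real.cos_neg, Real.cos_zero, hc1, hc2, hh, hN]
  have h5s : (5:ℝ)+Real.sqrt 5 ≠ 0 := by positivity
  have h3s : (3:ℝ)+Real.sqrt 5 ≠ 0 := by positivity
  have h3' : Real.sqrt 3 ≠ 0 := by positivity
  field_simp
  ring_nf
  rw [Real.sq_sqrt (by norm_num : (0:ℝ) ≤ 3)]
  ring_nf
  linear_combination (-60 - 24*Real.sqrt 5) * hs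

lemma sum_mulVec' {m κ : Type*} [Fintype m] [Fintype κ] (f : κ → Matrix m m ℂ) (x : m → ℂ) :
    (∑ i, f i).mulVec x = ∑ i, (f i).mulVec x := by
  ext j
  simp [Matrix.mulVec, dotProduct, Matrix.sum_apply, Finset.sum_mul]
  rw [Finset.sum_comm]

/-- `⟨Ψ⁺|ρ|Ψ⁺⟩ = (1/4)(1 − (7+√5)/(3(3+√5))) > 0` for the
pentagon UPB state. -/
theorem pentagon_overlap_value :
    inC ψplus3 (ρpent.mulVec ψplus3) =
      (((1 / 4) * (1 - (7 + Real.sqrt 5) / (3 * (3 + Real.sqrt 5))) : ℝ) : ℂ) ∧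
    0 < (1 / 4 : ℝ) * (1 - (7 + Real.sqrt 5) / (3 * (3 + Real.sqrt 5))) := by
  have hpos : 0 < (1 / 4 : ℝ) * (1 - (7 + Real.sqrt 5) / (3 * (3 + Real.sqrt 5))) := by
    have h1 : (7 + Real.sqrt 5) / (3 * (3 + Real.sqrt 5)) < 1 := by
      rw [div_lt_one (by positivity)]
      nlinarith [Real.sqrt_nonneg 5]
    nlinarith [h1]
  refine ⟨?_, hpos⟩
  rw [ρpent, Matrix.smul_mulVec, inC_smul, Matrix.sub_mulVec, Matrix.one_mulVec,
    inC_sub, inC_psi_psi, sum_mulVec', inC_sum]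
  simp only [inC_outer]
  rw [Fin.sum_univ_five,
    show ((2:Fin 5) * 0) = 0 by decide, show ((2:Fin 5) * 1) = 2 by decide,
    show ((2:Fin 5) * 2) = 4 by decide, show ((2:Fin 5) * 3) = 1 by decide,
    show ((2:Fin 5) * 4) = 3 by decide]
  simp only [conj_z]
  rw [← Complex.ofReal_add, ← Complex.ofReal_add, ← Complex.ofReal_add, ← Complex.ofReal_add,
    ← Complex.ofReal_one, ← Complex.ofReal_sub,
    show ((4:ℂ)⁻¹) = (((4:ℝ)⁻¹ : ℝ) : ℂ) by norm_num, ← Complex.ofReal_mul]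
  rw [Complex.ofReal_inj]
  have h := core
  rw [show ((3:Fin 5):ℕ) = 3 by rfl, show ((4:Fin 5):ℕ) = 4 by rfl]
  norm_num at h ⊢
  linarith [h]
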